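/- Let η_t = η_1 t^{-θ} for θ ∈ [0,1) and t ≥ 1. Then for all t ≥ 2, ∑_{k=1}^{t-1} (1/(k(k+1))) ∑_{i=t-k}^{t-1} η_i² ≤ 2 η_1² t^{-min(2θ,1)} (log t + 1). -/

import Mathlib

open Finset

lemma harmonic_le_log_add_one (n : ℕ) (hn : 1 ≤ n) :
    ∑ k ∈ Finset.Icc 1 n, (1 : ℝ) / k ≤ Real.log n + 1 := by
  induction n with
  | zero => omega
  | succ n ih =>
    rcases Nat.lt_or_ge 1 (n + 1) with h | h
    · have hn1 : 1 ≤ n := by omega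
      have hsum := Finset.sum_Icc_succ_top (by omega : 1 ≤ n + 1)
        (fun k : ℕ => (1 : ℝ) / k)
      rw [hsum]
      have hnp : (0 : ℝ) < n := by exact_mod_cast hn1
      have hnp1 : (0 : ℝ) < (n : ℝ) + 1 := by positivity
      have hlog : Real.log ((n : ℝ) / ((n : ℝ) + 1)) ≤ (n : ℝ) / ((n : ℝ) + 1) - 1 :=
        Real.log_le_sub_one_of_pos (by positivity)
      rw [Real.log_div (ne_of_gt hnp) (ne_of_gt hnp1)] at hlog
      have hstep : (1 : ℝ) / ((n : ℝ) + 1) ≤ Real.log ((n : ℝ) + 1) - Real.log n := by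
        have : (n : ℝ) / ((n : ℝ) + 1) - 1 = -(1 / ((n : ℝ) + 1)) := by
          field_simp
          ring
        linarith [hlog, this ▸ hlog]
      have ihn := ih hn1
      push_cast
      push_cast at ihn
      linarith
    · have : n = 0 := by omega
      subst this
      simp

/-- For step-sizes η_i = η₁ i^{-θ} with θ ∈ [0,1), for all t ≥ 2,
    ∑_{k=1}^{t-1} (1/(k(k+1))) ∑_{i=t-k}^{t-1} η_i² ≤ 2 η₁² t^{-min(2θ,1)} (log t + 1). -/
theorem double_sum_stepsize_bound (θ η₁ : ℝ) (hθ0 : 0 ≤ θ) (hθ1 : θ < 1)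
    (hη₁ : 0 < η₁) (t : ℕ) (ht : 2 ≤ t) :
    ∑ k ∈ Finset.Icc 1 (t - 1), (1 / ((k : ℝ) * ((k : ℝ) + 1))) *
        ∑ i ∈ Finset.Icc (t - k) (t - 1), (η₁ * (i : ℝ) ^ (-θ)) ^ 2 ≤
      2 * η₁ ^ 2 * (t : ℝ) ^ (-(min (2 * θ) 1)) * (Real.log t + 1) := by
  set m : ℝ := min (2 * θ) 1 with hmdef
  have hm0 : 0 ≤ m := le_min (by linarith) zero_le_one
  have hm1 : m ≤ 1 := min_le_right _ _
  have hm2θ : m ≤ 2 * θ := min_le_left _ _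
  have hT2 : (2 : ℝ) ≤ (t : ℝ) := by exact_mod_cast ht
  have hT0 : (0 : ℝ) < (t : ℝ) := by linarith
  -- termwise bound
  have step1 : ∀ k ∈ Finset.Icc 1 (t - 1),
      (1 / ((k : ℝ) * ((k : ℝ) + 1))) *
        ∑ i ∈ Finset.Icc (t - k) (t - 1), (η₁ * (i : ℝ) ^ (-θ)) ^ 2 ≤
      η₁ ^ 2 * (t : ℝ) ^ (-m) * (1 / (((t - k : ℕ) : ℝ)) + 1 / (k : ℝ)) := by
    intro k hk
    rw [Finset.mem_Icc] at hk
    obtain ⟨hk1, hk2⟩ := hk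
    set a : ℝ := ((t - k : ℕ) : ℝ) with hadef
    have haK : a + (k : ℝ) = (t : ℝ) := by
      rw [hadef, ← Nat.cast_add]
      congr 1
      omega
    have ha1 : (1 : ℝ) ≤ a := by
      rw [hadef]; exact_mod_cast Nat.one_le_iff_ne_zero.mpr (by omega)
    have ha0 : (0 : ℝ) < a := by linarith
    have hk1' : (1 : ℝ) ≤ (k : ℝ) := by exact_mod_cast hk1
    have hk0 : (0 : ℝ) < (k : ℝ) := by linarith
    have haT : a ≤ (t : ℝ) := by linarith
    -- inner term bound
    have hinner : ∀ i ∈ Finset.Icc (t - k) (t - 1),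
        (η₁ * (i : ℝ) ^ (-θ)) ^ 2 ≤ η₁ ^ 2 * a ^ (-m) := by
      intro i hi
      rw [Finset.mem_Icc] at hi
      have hia : a ≤ (i : ℝ) := by rw [hadef]; exact_mod_cast hi.1
      have hi1 : (1 : ℝ) ≤ (i : ℝ) := le_trans ha1 hia
      have hi0 : (0 : ℝ) < (i : ℝ) := by linarith
      have h1 : (η₁ * (i : ℝ) ^ (-θ)) ^ 2 = η₁ ^ 2 * (i : ℝ) ^ (-(2 * θ)) := by
        rw [mul_pow, sq ((i : ℝ) ^ (-θ)), ← Real.rpow_add hi0]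
        ring_nf
      rw [h1]
      have h2 : (i : ℝ) ^ (-(2 * θ)) ≤ (i : ℝ) ^ (-m) :=
        Real.rpow_le_rpow_of_exponent_le hi1 (by linarith)
      have h3 : (i : ℝ) ^ (-m) ≤ a ^ (-m) :=
        Real.rpow_le_rpow_of_nonpos ha0 hia (by linarith)
      have hη2 : (0 : ℝ) ≤ η₁ ^ 2 := sq_nonneg _
      nlinarith
    have hcard : (Finset.Icc (t - k) (t - 1)).card = k := by
      rw [Nat.card_Icc]; omega
    have hsum : ∑ i ∈ Finset.Icc (t - k) (t - 1), (η₁ * (i : ℝ) ^ (-θ)) ^ 2 ≤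
        (k : ℝ) * (η₁ ^ 2 * a ^ (-m)) := by
      calc ∑ i ∈ Finset.Icc (t - k) (t - 1), (η₁ * (i : ℝ) ^ (-θ)) ^ 2
          ≤ ∑ _i ∈ Finset.Icc (t - k) (t - 1), η₁ ^ 2 * a ^ (-m) :=
            Finset.sum_le_sum hinner
        _ = (k : ℝ) * (η₁ ^ 2 * a ^ (-m)) := by
            rw [Finset.sum_const, hcard, nsmul_eq_mul]
    have hfac : (0 : ℝ) ≤ 1 / ((k : ℝ) * ((k : ℝ) + 1)) := by positivity
    calc (1 / ((k : ℝ) * ((k : ℝ) + 1))) *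
          ∑ i ∈ Finset.Icc (t - k) (t - 1), (η₁ * (i : ℝ) ^ (-θ)) ^ 2
        ≤ (1 / ((k : ℝ) * ((k : ℝ) + 1))) * ((k : ℝ) * (η₁ ^ 2 * a ^ (-m))) :=
          mul_le_mul_of_nonneg_left hsum hfac
      _ = η₁ ^ 2 * a ^ (-m) * (1 / ((k : ℝ) + 1)) := by
          field_simp
      _ ≤ η₁ ^ 2 * ((t : ℝ) ^ (-m) * (1 / a + 1 / (k : ℝ))) := by
          have hA2 : a ^ (-m) * a = a ^ (1 - m) := by
            rw [← Real.rpow_add_one (ne_of_gt ha0)]; ring_nf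
          have hA3 : (t : ℝ) ^ (-m) * (t : ℝ) = (t : ℝ) ^ (1 - m) := by
            rw [← Real.rpow_add_one (ne_of_gt hT0)]; ring_nf
          have hA1 : a ^ (1 - m) ≤ (t : ℝ) ^ (1 - m) :=
            Real.rpow_le_rpow (le_of_lt ha0) haT (by linarith)
          have key : a ^ (-m) * (1 / ((k : ℝ) + 1)) ≤
              (t : ℝ) ^ (-m) * (1 / a + 1 / (k : ℝ)) := by
            have e1 : a ^ (-m) * (1 / ((k : ℝ) + 1)) ≤ a ^ (-m) * (1 / (k : ℝ)) := by
              have hp : (0 : ℝ) ≤ a ^ (-m) := le_of_lt (Real.rpow_pos_of_pos ha0 _)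
              have : 1 / ((k : ℝ) + 1) ≤ 1 / (k : ℝ) :=
                one_div_le_one_div_of_le hk0 (by linarith)
              exact mul_le_mul_of_nonneg_left this hp
            have e2 : a ^ (-m) * (1 / (k : ℝ)) = a ^ (1 - m) / (a * (k : ℝ)) := by
              rw [← hA2]; field_simp
            have e3 : (t : ℝ) ^ (-m) * (1 / a + 1 / (k : ℝ)) =
                (t : ℝ) ^ (1 - m) / (a * (k : ℝ)) := by
              have hak : 1 / a + 1 / (k : ℝ) = (t : ℝ) / (a * (k : ℝ)) := by
                field_simp
                linarith
              rw [hak, ← hA3]; ring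
            have e4 : a ^ (1 - m) / (a * (k : ℝ)) ≤ (t : ℝ) ^ (1 - m) / (a * (k : ℝ)) := by
              exact div_le_div_of_nonneg_right hA1 (by positivity)
            calc a ^ (-m) * (1 / ((k : ℝ) + 1)) ≤ a ^ (-m) * (1 / (k : ℝ)) := e1
              _ = a ^ (1 - m) / (a * (k : ℝ)) := e2
              _ ≤ (t : ℝ) ^ (1 - m) / (a * (k : ℝ)) := e4
              _ = (t : ℝ) ^ (-m) * (1 / a + 1 / (k : ℝ)) := e3.symm
          have hη2 : (0 : ℝ) ≤ η₁ ^ 2 := sq_nonneg _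
          calc η₁ ^ 2 * a ^ (-m) * (1 / ((k : ℝ) + 1))
              = η₁ ^ 2 * (a ^ (-m) * (1 / ((k : ℝ) + 1))) := by ring
            _ ≤ η₁ ^ 2 * ((t : ℝ) ^ (-m) * (1 / a + 1 / (k : ℝ))) :=
                mul_le_mul_of_nonneg_left key hη2
      _ = η₁ ^ 2 * (t : ℝ) ^ (-m) * (1 / a + 1 / (k : ℝ)) := by ring
  -- reindex
  have hreindex : ∑ k ∈ Finset.Icc 1 (t - 1), (1 : ℝ) / (((t - k : ℕ) : ℝ)) =
      ∑ k ∈ Finset.Icc 1 (t - 1), (1 : ℝ) / (k : ℝ) := by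
    apply Finset.sum_nbij' (i := fun k => t - k) (j := fun k => t - k)
    · intro x hx; rw [Finset.mem_Icc] at *; omega
    · intro x hx; rw [Finset.mem_Icc] at *; omega
    · intro x hx; rw [Finset.mem_Icc] at hx; omega
    · intro x hx; rw [Finset.mem_Icc] at hx; omega
    · intro x hx; rfl
  have hharm : ∑ k ∈ Finset.Icc 1 (t - 1), (1 : ℝ) / (k : ℝ) ≤ Real.log t + 1 := by
    have h1 := harmonic_le_log_add_one (t - 1) (by omega)
    have h2 : Real.log ((t - 1 : ℕ) : ℝ) ≤ Real.log t := by
      apply Real.log_le_log (by exact_mod_cast Nat.sub_pos_of_lt (by omega))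
      exact_mod_cast Nat.sub_le t 1
    linarith
  have hTm : (0 : ℝ) < (t : ℝ) ^ (-m) := Real.rpow_pos_of_pos hT0 _
  calc ∑ k ∈ Finset.Icc 1 (t - 1), (1 / ((k : ℝ) * ((k : ℝ) + 1))) *
        ∑ i ∈ Finset.Icc (t - k) (t - 1), (η₁ * (i : ℝ) ^ (-θ)) ^ 2
      ≤ ∑ k ∈ Finset.Icc 1 (t - 1),
          η₁ ^ 2 * (t : ℝ) ^ (-m) * (1 / (((t - k : ℕ) : ℝ)) + 1 / (k : ℝ)) :=
        Finset.sum_le_sum step1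
    _ = η₁ ^ 2 * (t : ℝ) ^ (-m) *
          ((∑ k ∈ Finset.Icc 1 (t - 1), (1 : ℝ) / (((t - k : ℕ) : ℝ))) +
            ∑ k ∈ Finset.Icc 1 (t - 1), (1 : ℝ) / (k : ℝ)) := by
        rw [← Finset.mul_sum, Finset.sum_add_distrib]
    _ = η₁ ^ 2 * (t : ℝ) ^ (-m) * (2 * ∑ k ∈ Finset.Icc 1 (t - 1), (1 : ℝ) / (k : ℝ)) := by
        rw [hreindex]; ring
    _ ≤ η₁ ^ 2 * (t : ℝ) ^ (-m) * (2 * (Real.log t + 1)) := by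
        apply mul_le_mul_of_nonneg_left _ (by positivity)
        linarith
    _ = 2 * η₁ ^ 2 * (t : ℝ) ^ (-m) * (Real.log t + 1) := by ring
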